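/- Let G be a graph on n vertices with minimum degree at least δn, let (L,R) be a partition of V with OPT = |E(L,R)|, and fix a with 0 < a < 1/6. Let X be a set of vertices such that every v ∈ X∩L satisfies |N(v)∩R| ≥ (1/2 − 3a)·deg(v) and every v ∈ X∩R satisfies |N(v)∩L| ≥ (1/2 − 3a)·deg(v). Then vol(X) ≤ 2·OPT/(1/2 − 3a) and |X| ≤ 2·OPT/((1/2 − 3a)·δn). -/

import Mathlib

open Finset

theorem stmt4 {V : Type*} [Fintype V] [DecidableEq V] (G : SimpleGraph V)
    [DecidableRel G.Adj] (δ a : ℝ) (hδ : 0 < δ) (ha0 : 0 < a) (ha1 : a < 1 / 6)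
    (hdeg : ∀ v : V, δ * Fintype.card V ≤ G.degree v)
    (L R : Finset V) (hpart : L ∪ R = Finset.univ) (hdisj : Disjoint L R)
    (X : Finset V)
    (hXL : ∀ v ∈ X ∩ L, (1 / 2 - 3 * a) * (G.degree v : ℝ) ≤ ((G.neighborFinset v ∩ R).card : ℝ))
    (hXR : ∀ v ∈ X ∩ R, (1 / 2 - 3 * a) * (G.degree v : ℝ) ≤ ((G.neighborFinset v ∩ L).card : ℝ)) :
    (∑ v ∈ X, (G.degree v : ℝ))
        ≤ 2 * (∑ v ∈ L, ((G.neighborFinset v ∩ R).card : ℝ)) / (1 / 2 - 3 * a) ∧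
      (X.card : ℝ) ≤ 2 * (∑ v ∈ L, ((G.neighborFinset v ∩ R).card : ℝ))
        / ((1 / 2 - 3 * a) * (δ * Fintype.card V)) := by
  have hcpos : (0 : ℝ) < 1 / 2 - 3 * a := by linarith
  set c : ℝ := 1 / 2 - 3 * a with hc
  set OPT : ℝ := ∑ v ∈ L, ((G.neighborFinset v ∩ R).card : ℝ) with hOPT
  have hkey : ∀ (A B : Finset V), ∑ v ∈ A, ((G.neighborFinset v ∩ B).card : ℝ)
      = ∑ v ∈ A, ∑ u ∈ B, (if G.Adj v u then (1 : ℝ) else 0) := by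
    intro A B
    refine Finset.sum_congr rfl fun v _ => ?_
    have : G.neighborFinset v ∩ B = B.filter (G.Adj v) := by
      ext u; simp [SimpleGraph.mem_neighborFinset, and_comm]
    rw [this, Finset.sum_boole]
  have hsym : (∑ v ∈ R, ((G.neighborFinset v ∩ L).card : ℝ)) = OPT := by
    rw [hOPT, hkey, hkey, Finset.sum_comm]
    refine Finset.sum_congr rfl fun v _ => Finset.sum_congr rfl fun u _ => ?_
    exact if_congr (G.adj_comm _ _) rfl rfl
  have hXsplit : X = (X ∩ L) ∪ (X ∩ R) := by
    rw [← Finset.inter_union_distrib_left, hpart, Finset.inter_univ]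
  have hXdisj : Disjoint (X ∩ L) (X ∩ R) :=
    (hdisj.mono (Finset.inter_subset_right) (Finset.inter_subset_right))
  have hnonnegR : ∀ v ∈ L, v ∉ X ∩ L → (0 : ℝ) ≤ ((G.neighborFinset v ∩ R).card : ℝ) := by
    intro v _ _; exact Nat.cast_nonneg _
  have hnonnegL : ∀ v ∈ R, v ∉ X ∩ R → (0 : ℝ) ≤ ((G.neighborFinset v ∩ L).card : ℝ) := by
    intro v _ _; exact Nat.cast_nonneg _
  have hmain : c * (∑ v ∈ X, (G.degree v : ℝ)) ≤ 2 * OPT := by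
    have h1 : ∑ v ∈ X ∩ L, c * (G.degree v : ℝ) ≤ OPT := by
      calc ∑ v ∈ X ∩ L, c * (G.degree v : ℝ)
          ≤ ∑ v ∈ X ∩ L, ((G.neighborFinset v ∩ R).card : ℝ) :=
            Finset.sum_le_sum hXL
        _ ≤ OPT := Finset.sum_le_sum_of_subset_of_nonneg
            (Finset.inter_subset_right) hnonnegR
    have h2 : ∑ v ∈ X ∩ R, c * (G.degree v : ℝ) ≤ OPT := by
      calc ∑ v ∈ X ∩ R, c * (G.degree v : ℝ)
          ≤ ∑ v ∈ X ∩ R, ((G.neighborFinset v ∩ L).card : ℝ) :=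
            Finset.sum_le_sum hXR
        _ ≤ OPT := by
            rw [← hsym]
            exact Finset.sum_le_sum_of_subset_of_nonneg
              (Finset.inter_subset_right) hnonnegL
    rw [Finset.mul_sum]
    calc ∑ v ∈ X, c * (G.degree v : ℝ)
        = ∑ v ∈ X ∩ L, c * (G.degree v : ℝ) + ∑ v ∈ X ∩ R, c * (G.degree v : ℝ) := by
          conv_lhs => rw [hXsplit]
          exact Finset.sum_union hXdisj
      _ ≤ 2 * OPT := by linarith
  have hOPTnonneg : 0 ≤ OPT := Finset.sum_nonneg fun v _ => Nat.cast_nonneg _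
  constructor
  · rw [le_div_iff₀ hcpos]; linarith
  · rcases Nat.eq_zero_or_pos (Fintype.card V) with h0 | h0
    · have hX0 : X.card = 0 := Nat.le_zero.mp (h0 ▸ Finset.card_le_univ X)
      rw [hX0]
      push_cast
      exact div_nonneg (by linarith) (mul_nonneg hcpos.le (mul_nonneg hδ.le (Nat.cast_nonneg _)))
    · have h0' : (0 : ℝ) < Fintype.card V := by exact_mod_cast h0
      have hδn : (0 : ℝ) < δ * Fintype.card V := by positivity
      rw [le_div_iff₀ (by positivity)]
      have hlb : (X.card : ℝ) * (δ * Fintype.card V) ≤ ∑ v ∈ X, (G.degree v : ℝ) := by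
        calc (X.card : ℝ) * (δ * Fintype.card V)
            = ∑ _v ∈ X, δ * Fintype.card V := by rw [Finset.sum_const, nsmul_eq_mul]
          _ ≤ ∑ v ∈ X, (G.degree v : ℝ) := Finset.sum_le_sum fun v _ => hdeg v
      nlinarith [hmain, hlb, hδn, hcpos]
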